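/- Let 0 < α < 1 and γ > 0. For every real z with |z| < γ log(1/α), the exponential generating series ∑_{n=0}^∞ (z^n/n!) t_n converges absolutely and equals (1−α)^γ (1 − α e^{−z/γ})^{−γ}. -/

import Mathlib

/-- Pochhammer symbol `(γ)_l = γ(γ+1)⋯(γ+l−1)`. -/
noncomputable def poch (γ : ℝ) (l : ℕ) : ℝ := ∏ i ∈ Finset.range l, (γ + i)

/-- Stirling numbers of the second kind. -/
def stirling2 : ℕ → ℕ → ℕ
  | 0, 0 => 1
  | 0, _+1 => 0
  | _+1, 0 => 0
  | n+1, k+1 => (k+1) * stirling2 n (k+1) + stirling2 n k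

/-- `t_n(α,γ) = (−1)^n γ^{−n} ∑_{i=0}^n S(n,i) (γ)_i (α/(1−α))^i`. -/
noncomputable def tcoef (α γ : ℝ) (n : ℕ) : ℝ :=
  (-1)^n * (γ^n)⁻¹ *
    ∑ i ∈ Finset.range (n+1), (stirling2 n i : ℝ) * poch γ i * (α/(1-α))^i


lemma poch_zero (γ : ℝ) : poch γ 0 = 1 := by simp [poch]

lemma poch_succ (γ : ℝ) (i : ℕ) : poch γ (i+1) = poch γ i * (γ + i) := by
  simp [poch, Finset.prod_range_succ]

lemma poch_pos {γ : ℝ} (hγ : 0 < γ) (i : ℕ) : 0 < poch γ i := by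
  induction i with
  | zero => simp [poch_zero]
  | succ n ih => rw [poch_succ]; positivity

lemma stirling2_eq_zero_of_lt : ∀ n i : ℕ, n < i → stirling2 n i = 0 := by
  intro n
  induction n with
  | zero => intro i hi; match i, hi with | k+1, _ => rfl
  | succ m ih =>
    intro i hi
    match i, hi with
    | k+1, hi =>
      have h1 : m < k+1 := by omega
      have h2 : m < k := by omega
      simp [stirling2, ih _ h1, ih _ h2]

lemma stirling2_explicit (n i : ℕ) :
    (Nat.factorial i : ℝ) * stirling2 n i
      = ∑ j ∈ Finset.range (i+1), (-1:ℝ)^(i+j) * (i.choose j) * (j:ℝ)^n := by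
  induction n generalizing i with
  | zero =>
    have : ∑ j ∈ Finset.range (i+1), (-1:ℝ)^(i+j) * (i.choose j) * (j:ℝ)^0
        = (-1:ℝ)^i * ∑ j ∈ Finset.range (i+1), (-1:ℝ)^j * (i.choose j) := by
      rw [Finset.mul_sum]
      exact Finset.sum_congr rfl fun j _ => by rw [pow_add]; ring
    rw [this]
    have halt : (∑ j ∈ Finset.range (i+1), (-1:ℝ)^j * (i.choose j))
        = if i = 0 then 1 else 0 := by
      have h := congrArg (Int.cast : ℤ → ℝ) (Int.alternating_sum_range_choose (n := i))
      push_cast at h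
      simpa using h
    rw [halt]
    cases i with
    | zero => simp [stirling2]
    | succ k => simp [stirling2]
  | succ n ih =>
    cases i with
    | zero => simp [stirling2]
    | succ i =>
      have key1 : ∑ j ∈ Finset.range (i+2), (-1:ℝ)^(i+1+j) * (((i+1).choose j : ℕ):ℝ) * (j:ℝ)^(n+1)
          = ((i:ℝ)+1) * ∑ k ∈ Finset.range (i+1), (-1:ℝ)^(i+k) * ((i.choose k : ℕ):ℝ) * (((k:ℕ):ℝ)+1)^n := by
        rw [Finset.sum_range_succ', Finset.mul_sum]
        have h0 : (-1:ℝ)^(i+1+0) * (((i+1).choose 0 : ℕ):ℝ) * ((0:ℕ):ℝ)^(n+1) = 0 := by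
          simp
        rw [h0, add_zero]
        refine Finset.sum_congr rfl fun k _ => ?_
        have hsign : (-1:ℝ)^(i+1+(k+1)) = (-1)^(i+k) := by
          rw [show i+1+(k+1) = (i+k)+2 by ring, pow_add]
          norm_num
        have hc : (((i+1).choose (k+1) : ℕ) : ℝ) * ((k:ℝ)+1) = ((i:ℝ)+1) * ((i.choose k : ℕ):ℝ) := by
          have h2 := congrArg (Nat.cast : ℕ → ℝ) (Nat.add_one_mul_choose_eq i k)
          push_cast at h2
          linarith
        rw [hsign]
        push_cast
        calc (-1:ℝ)^(i+k) * (((i+1).choose (k+1) : ℕ):ℝ) * ((k:ℝ)+1)^(n+1)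
            = (-1:ℝ)^(i+k) * ((((i+1).choose (k+1) : ℕ):ℝ) * ((k:ℝ)+1)) * ((k:ℝ)+1)^n := by ring
          _ = ((i:ℝ)+1) * ((-1:ℝ)^(i+k) * ((i.choose k : ℕ):ℝ) * ((k:ℝ)+1)^n) := by rw [hc]; ring
      have hshift : ∑ k ∈ Finset.range (i+1), (-1:ℝ)^(i+k) * ((i.choose (k+1) : ℕ):ℝ) * (((k:ℕ):ℝ)+1)^n
          = -(∑ j ∈ Finset.range (i+1), (-1:ℝ)^(i+j) * ((i.choose j : ℕ):ℝ) * (j:ℝ)^n)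
            + (-1:ℝ)^i * (0:ℝ)^n := by
        have hext : ∑ j ∈ Finset.range (i+2), (-1:ℝ)^(i+j) * ((i.choose j : ℕ):ℝ) * (j:ℝ)^n
            = ∑ j ∈ Finset.range (i+1), (-1:ℝ)^(i+j) * ((i.choose j : ℕ):ℝ) * (j:ℝ)^n := by
          rw [Finset.sum_range_succ]
          simp
        rw [← hext, Finset.sum_range_succ'
          (fun j => (-1:ℝ)^(i+j) * ((i.choose j : ℕ):ℝ) * (j:ℝ)^n) (i+1)]
        have : ∀ k ∈ Finset.range (i+1),
            (-1:ℝ)^(i+(k+1)) * ((i.choose (k+1) : ℕ):ℝ) * (((k+1:ℕ)):ℝ)^n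
            = -((-1:ℝ)^(i+k) * ((i.choose (k+1) : ℕ):ℝ) * (((k:ℕ):ℝ)+1)^n) := by
          intro k _
          rw [show i+(k+1) = (i+k)+1 by ring, pow_succ]
          push_cast
          ring
        rw [Finset.sum_congr rfl this, Finset.sum_neg_distrib]
        simp only [Nat.choose_zero_right, Nat.cast_one, one_mul, Nat.cast_zero, mul_one]
        ring
      have key2 : ∑ k ∈ Finset.range (i+1), (-1:ℝ)^(i+k) * ((i.choose k : ℕ):ℝ) * (((k:ℕ):ℝ)+1)^n
          = (∑ j ∈ Finset.range (i+2), (-1:ℝ)^(i+1+j) * (((i+1).choose j : ℕ):ℝ) * (j:ℝ)^n)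
            + ∑ j ∈ Finset.range (i+1), (-1:ℝ)^(i+j) * ((i.choose j : ℕ):ℝ) * (j:ℝ)^n := by
        have hexpand : ∑ j ∈ Finset.range (i+2), (-1:ℝ)^(i+1+j) * (((i+1).choose j : ℕ):ℝ) * (j:ℝ)^n
            = (∑ k ∈ Finset.range (i+1), ((-1:ℝ)^(i+k) * ((i.choose k : ℕ):ℝ) * (((k:ℕ):ℝ)+1)^n
                + (-1:ℝ)^(i+k) * ((i.choose (k+1) : ℕ):ℝ) * (((k:ℕ):ℝ)+1)^n))
              + (-1:ℝ)^(i+1) * (0:ℝ)^n := by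
          rw [Finset.sum_range_succ'
            (fun j => (-1:ℝ)^(i+1+j) * (((i+1).choose j : ℕ):ℝ) * (j:ℝ)^n) (i+1)]
          congr 1
          · refine Finset.sum_congr rfl fun k _ => ?_
            have hsign : (-1:ℝ)^(i+1+(k+1)) = (-1)^(i+k) := by
              rw [show i+1+(k+1) = (i+k)+2 by ring, pow_add]
              norm_num
            rw [hsign]
            rw [Nat.choose_succ_succ]
            push_cast
            ring
          · simp [pow_succ]
        rw [hexpand, Finset.sum_add_distrib, hshift]
        have : (-1:ℝ)^(i+1) * (0:ℝ)^n = -((-1:ℝ)^i * (0:ℝ)^n) := by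
          rw [pow_succ]; ring
        rw [this]
        ring
      rw [key1, key2, ← ih, ← ih]
      have hdef : stirling2 (n+1) (i+1) = (i+1) * stirling2 n (i+1) + stirling2 n i := rfl
      rw [hdef]
      push_cast [Nat.factorial_succ]
      ring


lemma hasSum_exp_real (x : ℝ) : HasSum (fun n => x^n / (Nat.factorial n)) (Real.exp x) := by
  have hs := Real.summable_pow_div_factorial x
  have := hs.hasSum
  have he : Real.exp x = ∑' n : ℕ, x^n / (Nat.factorial n) := by
    rw [Real.exp_eq_exp_ℝ, NormedSpace.exp_eq_tsum_div]
  rwa [← he] at this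

lemma hasSum_stirling (t : ℝ) (i : ℕ) :
    HasSum (fun n => (stirling2 n i : ℝ) * t^n / (Nat.factorial n))
      ((Real.exp t - 1)^i / (Nat.factorial i)) := by
  have hfac : (0:ℝ) < (Nat.factorial i : ℝ) := by positivity
  -- rewrite general term
  have hterm : ∀ n : ℕ, (stirling2 n i : ℝ) * t^n / (Nat.factorial n)
      = ∑ j ∈ Finset.range (i+1),
          ((-1:ℝ)^(i+j) * ((i.choose j : ℕ):ℝ) / (Nat.factorial i)) * (((j:ℝ)*t)^n / (Nat.factorial n)) := by
    intro n
    have h := stirling2_explicit n i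
    have : (stirling2 n i : ℝ) = (∑ j ∈ Finset.range (i+1), (-1:ℝ)^(i+j) * ((i.choose j : ℕ):ℝ) * (j:ℝ)^n) / (Nat.factorial i) := by
      field_simp at h ⊢
      linarith
    rw [this, Finset.sum_div, Finset.sum_mul, Finset.sum_div]
    refine Finset.sum_congr rfl fun j _ => ?_
    rw [mul_pow]
    ring
  have hsum : HasSum (fun n => ∑ j ∈ Finset.range (i+1),
        ((-1:ℝ)^(i+j) * ((i.choose j : ℕ):ℝ) / (Nat.factorial i)) * (((j:ℝ)*t)^n / (Nat.factorial n)))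
      (∑ j ∈ Finset.range (i+1),
        ((-1:ℝ)^(i+j) * ((i.choose j : ℕ):ℝ) / (Nat.factorial i)) * Real.exp ((j:ℝ)*t)) := by
    refine hasSum_sum fun j _ => ?_
    exact (hasSum_exp_real ((j:ℝ)*t)).mul_left _
  have hval : (∑ j ∈ Finset.range (i+1),
        ((-1:ℝ)^(i+j) * ((i.choose j : ℕ):ℝ) / (Nat.factorial i)) * Real.exp ((j:ℝ)*t))
      = (Real.exp t - 1)^i / (Nat.factorial i) := by
    have hbin : (Real.exp t + (-1))^i
        = ∑ j ∈ Finset.range (i+1), (Real.exp t)^j * (-1:ℝ)^(i-j) * (i.choose j) := by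
      exact add_pow (Real.exp t) (-1) i
    have : (Real.exp t - 1)^i = ∑ j ∈ Finset.range (i+1), (-1:ℝ)^(i+j) * (i.choose j) * Real.exp ((j:ℝ)*t) := by
      rw [show Real.exp t - 1 = Real.exp t + (-1) by ring, hbin]
      refine Finset.sum_congr rfl fun j hj => ?_
      have hji : j ≤ i := by
        simp only [Finset.mem_range] at hj; omega
      have hsign : (-1:ℝ)^(i-j) = (-1:ℝ)^(i+j) := by
        rw [show i+j = (i-j) + 2*j by omega, pow_add, pow_mul]
        norm_num
      rw [hsign, Real.exp_nat_mul]
      ring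
    rw [this, Finset.sum_div]
    refine Finset.sum_congr rfl fun j _ => ?_
    ring
  rw [← hval]
  exact HasSum.congr_fun hsum (fun n => hterm n)

lemma summable_poch (γ : ℝ) (hγ : 0 < γ) {r : ℝ} (h0 : 0 ≤ r) (hr : r < 1) (k : ℕ) :
    Summable (fun i : ℕ => poch γ (i + k) * r ^ i / (Nat.factorial i)) := by
  set r' : ℝ := (1 + r) / 2 with hr'
  have hrr' : r < r' := by rw [hr']; linarith
  have hr'1 : r' < 1 := by rw [hr']; linarith
  refine summable_of_ratio_norm_eventually_le hr'1 ?_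
  rw [Filter.eventually_atTop]
  refine ⟨Nat.ceil ((γ + k) * r / (r' - r)), fun i hi => ?_⟩
  have hfi : (0:ℝ) < (Nat.factorial i : ℝ) := by positivity
  have hpos : 0 < poch γ (i + k) := poch_pos hγ _
  have hnorm1 : ‖poch γ (i + 1 + k) * r ^ (i+1) / (Nat.factorial (i+1))‖
      = poch γ (i + k) * (γ + (i + k)) * (r ^ i * r) / ((Nat.factorial i) * (i+1)) := by
    rw [Real.norm_eq_abs, abs_of_nonneg]
    · rw [show i + 1 + k = (i + k) + 1 by ring, poch_succ, Nat.factorial_succ]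
      push_cast
      ring
    · have : 0 < poch γ (i + 1 + k) := poch_pos hγ _
      positivity
  have hnorm2 : ‖poch γ (i + k) * r ^ i / (Nat.factorial i)‖
      = poch γ (i + k) * r ^ i / (Nat.factorial i) := by
    rw [Real.norm_eq_abs, abs_of_nonneg]
    positivity
  rw [hnorm1, hnorm2]
  -- key: (γ + (i+k)) * r ≤ r' * (i+1)
  have hkey : (γ + (i + k)) * r ≤ r' * (i + 1) := by
    have hceil : (γ + k) * r / (r' - r) ≤ (i : ℝ) := by
      calc (γ + k) * r / (r' - r) ≤ (Nat.ceil ((γ + k) * r / (r' - r)) : ℝ) := Nat.le_ceil _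
        _ ≤ i := by exact_mod_cast hi
    have hd : 0 < r' - r := by linarith
    have := (div_le_iff₀ hd).mp hceil
    nlinarith
  calc poch γ (i + k) * (γ + (i + k)) * (r ^ i * r) / ((Nat.factorial i) * (i+1))
      = (poch γ (i + k) * r ^ i / (Nat.factorial i)) * (((γ + (i + k)) * r) / (i+1)) := by
        field_simp
    _ ≤ (poch γ (i + k) * r ^ i / (Nat.factorial i)) * r' := by
        refine mul_le_mul_of_nonneg_left ?_ (by positivity)
        rw [div_le_iff₀ (by positivity)]
        linarith [hkey]
    _ = r' * (poch γ (i + k) * r ^ i / (Nat.factorial i)) := by ring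

lemma hasSum_binomial (γ : ℝ) (hγ : 0 < γ) {w : ℝ} (hw : |w| < 1) :
    HasSum (fun i : ℕ => poch γ i * w ^ i / (Nat.factorial i)) ((1 - w) ^ (-γ)) := by
  set r : ℝ := (1 + |w|) / 2 with hrdef
  have h0r : 0 < r := by positivity
  have hwr : |w| < r := by rw [hrdef]; linarith
  have hr1 : r < 1 := by rw [hrdef]; linarith
  set g : ℕ → ℝ → ℝ := fun i y => poch γ i * y ^ i / (Nat.factorial i) with hgdef
  set g' : ℕ → ℝ → ℝ := fun i y => poch γ i * ((i : ℝ) * y ^ (i - 1)) / (Nat.factorial i)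
    with hg'def
  set u : ℕ → ℝ := fun i => poch γ i * ((i : ℝ) * r ^ (i - 1)) / (Nat.factorial i) with hudef
  have hderiv : ∀ (i : ℕ) (y : ℝ), HasDerivAt (g i) (g' i y) y := by
    intro i y
    exact ((hasDerivAt_pow i y).const_mul (poch γ i)).div_const _
  have hu : Summable u := by
    rw [← summable_nat_add_iff 1]
    refine (summable_poch γ hγ h0r.le hr1 1).congr fun i => ?_
    rw [hudef]
    simp only [Nat.add_sub_cancel, Nat.factorial_succ]
    have hfi : ((Nat.factorial i : ℕ) : ℝ) ≠ 0 := by positivity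
    have hi1 : ((i : ℝ) + 1) ≠ 0 := by positivity
    push_cast
    field_simp
  have hbound : ∀ (i : ℕ) (y : ℝ), y ∈ Metric.ball (0:ℝ) r → ‖g' i y‖ ≤ u i := by
    intro i y hy
    have hyr : |y| ≤ r := by
      rw [Metric.mem_ball, Real.dist_eq, sub_zero] at hy
      exact hy.le
    rw [hg'def, hudef]
    simp only [Real.norm_eq_abs, abs_div, abs_mul, abs_pow]
    rw [abs_of_nonneg (poch_pos hγ i).le, abs_of_nonneg (by positivity : (0:ℝ) ≤ (i:ℝ)),
      abs_of_nonneg (by positivity : (0:ℝ) ≤ ((Nat.factorial i : ℕ):ℝ))]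
    gcongr
    exact (poch_pos hγ i).le
  have hsum0 : Summable (fun i => g i 0) := by
    rw [← summable_nat_add_iff 1]
    refine summable_zero.congr fun i => ?_
    rw [hgdef]
    simp
  have hmem0 : (0:ℝ) ∈ Metric.ball (0:ℝ) r := Metric.mem_ball_self h0r
  have hD : ∀ y ∈ Metric.ball (0:ℝ) r,
      HasDerivAt (fun x => ∑' i, g i x) (∑' i, g' i y) y := by
    intro y hy
    exact hasDerivAt_tsum_of_isPreconnected hu Metric.isOpen_ball
      (convex_ball 0 r).isPreconnected (fun i x _ => hderiv i x)
      (fun i x hx => hbound i x hx) hmem0 hsum0 hy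
  have hgsum : ∀ y ∈ Metric.ball (0:ℝ) r, Summable (fun i => g i y) := by
    intro y hy
    have hyr : |y| ≤ r := by
      rw [Metric.mem_ball, Real.dist_eq, sub_zero] at hy
      exact hy.le
    refine Summable.of_norm_bounded ((summable_poch γ hγ h0r.le hr1 0).congr
      (fun i => by rw [Nat.add_zero])) fun i => ?_
    rw [hgdef]
    simp only [Real.norm_eq_abs, abs_div, abs_mul, abs_pow]
    rw [abs_of_nonneg (poch_pos hγ i).le,
      abs_of_nonneg (by positivity : (0:ℝ) ≤ ((Nat.factorial i : ℕ):ℝ))]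
    gcongr
    exact (poch_pos hγ i).le
  have hg'sum : ∀ y ∈ Metric.ball (0:ℝ) r, Summable (fun i => g' i y) := by
    intro y hy
    exact Summable.of_norm_bounded hu fun i => hbound i y hy
  have hkey : ∀ y ∈ Metric.ball (0:ℝ) r,
      (1 - y) * (∑' i, g' i y) = γ * ∑' i, g i y := by
    intro y hy
    have h1 : ∑' i, g' i y = ∑' i, g' (i+1) y := by
      rw [(hg'sum y hy).tsum_eq_zero_add]
      have : g' 0 y = 0 := by rw [hg'def]; simp
      rw [this, zero_add]
    have hterm : ∀ i : ℕ, g' (i+1) y = γ * g i y + y * g' i y := by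
      intro i
      cases i with
      | zero =>
        rw [hg'def, hgdef]
        simp [poch_succ, poch_zero]
      | succ m =>
        rw [hg'def, hgdef]
        simp only [Nat.add_sub_cancel, Nat.factorial_succ]
        rw [show m + 1 + 1 = (m+1) + 1 by rfl, poch_succ]
        have hfm : ((Nat.factorial (m+1) : ℕ) : ℝ) ≠ 0 := by positivity
        push_cast
        field_simp
        ring
    have h2 : ∑' i, g' (i+1) y = γ * (∑' i, g i y) + y * (∑' i, g' i y) := by
      calc ∑' i, g' (i+1) y = ∑' i, (γ * g i y + y * g' i y) := tsum_congr hterm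
        _ = (∑' i, γ * g i y) + ∑' i, y * g' i y :=
            Summable.tsum_add ((hgsum y hy).mul_left γ) ((hg'sum y hy).mul_left y)
        _ = γ * (∑' i, g i y) + y * (∑' i, g' i y) := by rw [tsum_mul_left, tsum_mul_left]
    have hD2 := h1.trans h2
    linear_combination hD2
  -- the function F y = f y * (1-y)^γ has zero derivative on the ball
  set F : ℝ → ℝ := fun y => (∑' i, g i y) * (1 - y) ^ (γ : ℝ) with hFdef
  have hF' : ∀ y ∈ Metric.ball (0:ℝ) r, HasDerivAt F 0 y := by
    intro y hy
    have hy1 : 0 < 1 - y := by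
      rw [Metric.mem_ball, Real.dist_eq, sub_zero] at hy
      have := abs_lt.mp hy
      linarith
    have hin : HasDerivAt (fun x : ℝ => 1 - x) (-1) y := (hasDerivAt_id y).const_sub 1
    have hpow : HasDerivAt (fun x : ℝ => (1 - x) ^ (γ : ℝ)) (-(γ * (1-y)^(γ-1))) y := by
      have h := (Real.hasDerivAt_rpow_const (x := 1 - y) (p := γ)
        (Or.inl (ne_of_gt hy1))).comp y hin
      rw [show -(γ * (1-y)^(γ-1)) = γ * (1 - y) ^ (γ - 1) * -1 by ring]
      exact h
    have hmul := (hD y hy).mul hpow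
    have hzero : (∑' i, g' i y) * (1 - y) ^ (γ:ℝ)
        + (∑' i, g i y) * (-(γ * (1-y)^(γ-1))) = 0 := by
      have hrpow : (1-y) ^ (γ:ℝ) = (1-y) ^ (γ-1) * (1 - y) := by
        rw [← Real.rpow_add_one (ne_of_gt hy1) (γ-1)]
        norm_num
      rw [hrpow]
      have hk := hkey y hy
      linear_combination ((1-y) ^ (γ-1)) * hk
    rw [← hzero]
    exact hmul
  have hconst : F w = F 0 := by
    have hwball : w ∈ Metric.ball (0:ℝ) r := by
      rw [Metric.mem_ball, Real.dist_eq, sub_zero]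
      exact hwr
    refine Convex.is_const_of_fderivWithin_eq_zero (𝕜 := ℝ) (convex_ball 0 r) ?_ ?_ hwball hmem0
    · intro y hy
      exact ((hF' y hy).differentiableAt).differentiableWithinAt
    · intro y hy
      have hfd : HasFDerivAt F (0 : ℝ →L[ℝ] ℝ) y := by
        have h := (hF' y hy).hasFDerivAt
        have h0 : ContinuousLinearMap.toSpanSingleton ℝ (0:ℝ) = (0 : ℝ →L[ℝ] ℝ) := by
          ext
          simp
        rwa [h0] at h
      rw [(hfd.hasFDerivWithinAt).fderivWithin (Metric.isOpen_ball.uniqueDiffWithinAt hy)]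
  have hF0 : F 0 = 1 := by
    have hf0 : (∑' i, g i 0) = 1 := by
      rw [hsum0.tsum_eq_zero_add]
      have h00 : g 0 0 = 1 := by rw [hgdef]; simp [poch_zero]
      have hrest : ∑' i : ℕ, g (i+1) 0 = 0 := by
        convert tsum_zero with i
        rw [hgdef]
        simp
      rw [h00, hrest, add_zero]
    show (∑' i, g i 0) * (1 - (0:ℝ)) ^ (γ:ℝ) = 1
    rw [hf0, sub_zero, Real.one_rpow, one_mul]
  have hwball : w ∈ Metric.ball (0:ℝ) r := by
    rw [Metric.mem_ball, Real.dist_eq, sub_zero]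
    exact hwr
  have hfw : (∑' i, g i w) = (1 - w) ^ (-γ) := by
    have h1 : (∑' i, g i w) * (1 - w) ^ (γ:ℝ) = 1 := by
      have := hconst
      rw [hF0] at this
      exact this
    have h1w : 0 < 1 - w := by
      have := abs_lt.mp hw
      linarith
    have hne : (1 - w) ^ (γ:ℝ) ≠ 0 := by
      exact (Real.rpow_pos_of_pos h1w γ).ne'
    rw [Real.rpow_neg h1w.le, ← one_div, eq_div_iff hne]
    exact h1
  have := (hgsum w hwball).hasSum
  rw [hfw] at this
  exact this

/-- For `0 < α < 1`, `γ > 0` and real `z` with `|z| < γ log(1/α)`, the exponential generating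
series `∑ (zⁿ/n!) t_n` converges absolutely and equals `(1−α)^γ (1 − α e^{−z/γ})^{−γ}`. -/
theorem tcoef_exp_generating_function (α γ : ℝ) (hα0 : 0 < α) (hα1 : α < 1) (hγ : 0 < γ)
    (z : ℝ) (hz : |z| < γ * Real.log (1/α)) :
    Summable (fun n : ℕ => |z^n / (Nat.factorial n) * tcoef α γ n|) ∧
    ∑' n : ℕ, z^n / (Nat.factorial n) * tcoef α γ n
      = (1 - α) ^ γ * (1 - α * Real.exp (-z/γ)) ^ (-γ) := by
  have hα' : 0 < 1 - α := by linarith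
  set x : ℝ := α / (1 - α) with hxdef
  have hx0 : 0 < x := div_pos hα0 hα'
  obtain ⟨u, hudef⟩ : ∃ u : ℝ, u = -z / γ := ⟨-z / γ, rfl⟩
  have hau : |u| < Real.log (1/α) := by
    rw [hudef, abs_div, abs_neg, abs_of_pos hγ, div_lt_iff₀ hγ]
    linarith [hz]
  have hlogpos : 0 < Real.log (1/α) := Real.log_pos ((one_lt_div hα0).mpr hα1)
  have hexpu : Real.exp |u| < 1/α := by
    have h := Real.exp_lt_exp.mpr hau
    rwa [Real.exp_log (by positivity)] at h
  have he1 : 1 ≤ Real.exp |u| := Real.one_le_exp (abs_nonneg u)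
  have hr0 : 0 ≤ x * (Real.exp |u| - 1) := by nlinarith
  have hr1 : x * (Real.exp |u| - 1) < 1 := by
    rw [hxdef, div_mul_eq_mul_div, div_lt_one hα']
    have h2 : α * Real.exp |u| < 1 := by
      have := (mul_lt_mul_iff_right₀ hα0).mpr hexpu
      rwa [mul_one_div, div_self (ne_of_gt hα0)] at this
    nlinarith
  have hwle : |Real.exp u - 1| ≤ Real.exp |u| - 1 := by
    rcases le_or_gt 0 u with h | h
    · rw [abs_of_nonneg h, abs_of_nonneg (by linarith [Real.one_le_exp h] : (0:ℝ) ≤ Real.exp u - 1)]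
    · rw [abs_of_neg h]
      have h1 := Real.add_one_le_exp u
      have h2 := Real.add_one_le_exp (-u)
      have hexp : Real.exp u ≤ 1 := (Real.exp_le_one_iff).mpr h.le
      rw [abs_of_nonpos (by linarith : Real.exp u - 1 ≤ 0)]
      linarith
  have hw : |x * (Real.exp u - 1)| < 1 := by
    rw [abs_mul, abs_of_pos hx0]
    calc x * |Real.exp u - 1| ≤ x * (Real.exp |u| - 1) :=
          mul_le_mul_of_nonneg_left hwle hx0.le
      _ < 1 := hr1
  set G : ℕ → ℕ → ℝ :=
    fun i n => (stirling2 n i : ℝ) * poch γ i * x ^ i * u ^ n / (Nat.factorial n) with hGdef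
  have hGi : ∀ (t : ℝ) (i : ℕ),
      HasSum (fun n => (stirling2 n i : ℝ) * poch γ i * x ^ i * t ^ n / (Nat.factorial n))
        (poch γ i * x ^ i * (Real.exp t - 1) ^ i / (Nat.factorial i)) := by
    intro t i
    have h := (hasSum_stirling t i).mul_left (poch γ i * x ^ i)
    have heq : (fun n => (stirling2 n i : ℝ) * poch γ i * x ^ i * t ^ n / (Nat.factorial n))
        = (fun n => (poch γ i * x ^ i) * ((stirling2 n i : ℝ) * t ^ n / (Nat.factorial n))) := by
      funext n; ring
    rw [heq, show poch γ i * x ^ i * (Real.exp t - 1) ^ i / (Nat.factorial i)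
      = (poch γ i * x ^ i) * ((Real.exp t - 1) ^ i / (Nat.factorial i)) by ring]
    exact h
  have hSnonneg : ∀ i n, (0:ℝ) ≤ (stirling2 n i : ℝ) * poch γ i * x ^ i :=
    fun i n => mul_nonneg (mul_nonneg (Nat.cast_nonneg _) (poch_pos hγ i).le)
      (pow_nonneg hx0.le i)
  have habs : ∀ i n, |G i n|
      = (stirling2 n i : ℝ) * poch γ i * x ^ i * |u| ^ n / (Nat.factorial n) := by
    intro i n
    rw [hGdef]
    simp only
    rw [abs_div, abs_mul, abs_pow, abs_of_nonneg (hSnonneg i n),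
      abs_of_nonneg (by positivity : (0:ℝ) ≤ ((Nat.factorial n : ℕ):ℝ))]
  have hItersum : ∀ i, HasSum (fun n => |G i n|)
      (poch γ i * x ^ i * (Real.exp |u| - 1) ^ i / (Nat.factorial i)) :=
    fun i => HasSum.congr_fun (hGi |u| i) (fun n => habs i n)
  have houter : Summable (fun i => poch γ i * x ^ i * (Real.exp |u| - 1) ^ i / (Nat.factorial i)) := by
    refine (summable_poch γ hγ hr0 hr1 0).congr fun i => ?_
    rw [Nat.add_zero, mul_pow]
    ring
  have hprodabs : Summable (fun p : ℕ × ℕ => |G p.1 p.2|) := by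
    rw [summable_prod_of_nonneg (fun p => abs_nonneg _)]
    refine ⟨fun i => (hItersum i).summable, ?_⟩
    refine houter.congr fun i => ?_
    exact ((hItersum i).tsum_eq).symm
  have hprodabs' : Summable (fun p : ℕ × ℕ => |G p.2 p.1|) := hprodabs.prod_symm
  have hrowsum : Summable (fun n => ∑' i, |G i n|) :=
    ((summable_prod_of_nonneg (fun p => abs_nonneg _)).mp hprodabs').2
  have hsupp : ∀ n i, i ∉ Finset.range (n+1) → G i n = 0 := by
    intro n i hi
    have hlt : n < i := by
      rw [Finset.mem_range, not_lt] at hi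
      omega
    rw [hGdef]
    simp only
    rw [stirling2_eq_zero_of_lt n i hlt]
    simp
  have hrepr : ∀ n : ℕ, z ^ n / (Nat.factorial n : ℝ) * tcoef α γ n
      = ∑ i ∈ Finset.range (n+1), G i n := by
    intro n
    have hGterm : ∀ i, G i n
        = (u ^ n / (Nat.factorial n : ℝ)) * ((stirling2 n i : ℝ) * poch γ i * x ^ i) := by
      intro i; rw [hGdef]; ring
    rw [Finset.sum_congr rfl (fun i _ => hGterm i), ← Finset.mul_sum, tcoef]
    have hun : u ^ n = (-1:ℝ)^n * ((γ:ℝ)^n)⁻¹ * z^n := by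
      rw [hudef, div_pow, neg_pow]
      ring
    rw [hun, ← hxdef]
    ring
  have hSignonneg : ∀ n, (0:ℝ) ≤ ∑ i ∈ Finset.range (n+1),
      (stirling2 n i : ℝ) * poch γ i * x ^ i :=
    fun n => Finset.sum_nonneg fun i _ => hSnonneg i n
  have hrow_eq : ∀ n : ℕ, ∑' i, |G i n| = |z ^ n / (Nat.factorial n) * tcoef α γ n| := by
    intro n
    have h1 : ∑' i, |G i n| = ∑ i ∈ Finset.range (n+1), |G i n| :=
      tsum_eq_sum (fun i hi => by rw [hsupp n i hi, abs_zero])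
    have h2 : ∑ i ∈ Finset.range (n+1), |G i n|
        = |u| ^ n / (Nat.factorial n : ℝ) * ∑ i ∈ Finset.range (n+1),
            (stirling2 n i : ℝ) * poch γ i * x ^ i := by
      rw [Finset.mul_sum]
      refine Finset.sum_congr rfl fun i _ => ?_
      rw [habs i n]
      ring
    have h3 : z ^ n / (Nat.factorial n : ℝ) * tcoef α γ n
        = u ^ n / (Nat.factorial n : ℝ) * ∑ i ∈ Finset.range (n+1),
            (stirling2 n i : ℝ) * poch γ i * x ^ i := by
      rw [hrepr n, Finset.mul_sum]
      refine Finset.sum_congr rfl fun i _ => ?_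
      rw [hGdef]
      ring
    have h4 : |u ^ n / ((Nat.factorial n : ℕ) : ℝ)| = |u| ^ n / ((Nat.factorial n : ℕ) : ℝ) := by
      rw [abs_div, abs_pow, abs_of_nonneg (by positivity : (0:ℝ) ≤ ((Nat.factorial n : ℕ):ℝ))]
    rw [h1, h2, h3, abs_mul, h4, abs_of_nonneg (hSignonneg n)]
  constructor
  · exact hrowsum.congr hrow_eq
  · have hGsum : Summable (fun p : ℕ × ℕ => G p.1 p.2) := by
      refine Summable.of_norm ?_
      simpa [Real.norm_eq_abs] using hprodabs
    have h₁ : ∀ i, Summable (fun n => G i n) := fun i => (hGi u i).summable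
    have h₂ : ∀ n, Summable (fun i => G i n) := by
      intro n
      exact summable_of_ne_finset_zero (s := Finset.range (n+1)) (fun i hi => hsupp n i hi)
    have hswap : ∑' n, ∑' i, G i n = ∑' i, ∑' n, G i n := Summable.tsum_comm' hGsum h₁ h₂
    have hL : ∑' n : ℕ, z^n / (Nat.factorial n) * tcoef α γ n = ∑' n, ∑' i, G i n := by
      refine tsum_congr fun n => ?_
      rw [hrepr n]
      exact (tsum_eq_sum (fun i hi => hsupp n i hi)).symm
    have hR : ∑' i, ∑' n, G i n = (1 - x * (Real.exp u - 1)) ^ (-γ) := by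
      have hstep : ∀ i : ℕ, ∑' n, G i n
          = poch γ i * (x * (Real.exp u - 1)) ^ i / (Nat.factorial i) := by
        intro i
        rw [(hGi u i).tsum_eq, mul_pow]
        ring
      rw [tsum_congr hstep]
      exact (hasSum_binomial γ hγ hw).tsum_eq
    have hexpeq : Real.exp u = Real.exp (-z/γ) := by rw [hudef]
    have hpos : 0 < 1 - α * Real.exp u := by
      have hle : Real.exp u ≤ Real.exp |u| := Real.exp_le_exp.mpr (le_abs_self u)
      have h2 : α * Real.exp |u| < 1 := by
        have := (mul_lt_mul_iff_right₀ hα0).mpr hexpu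
        rwa [mul_one_div, div_self (ne_of_gt hα0)] at this
      nlinarith
    have hfinal : (1 - x * (Real.exp u - 1)) ^ (-γ)
        = (1 - α) ^ γ * (1 - α * Real.exp (-z/γ)) ^ (-γ) := by
      have h1mw : 1 - x * (Real.exp u - 1) = (1 - α * Real.exp u) / (1 - α) := by
        rw [hxdef]
        field_simp
        ring
      rw [h1mw, Real.div_rpow hpos.le hα'.le, hexpeq]
      rw [show (1 - α) ^ (-γ) = ((1 - α) ^ γ)⁻¹ from Real.rpow_neg hα'.le γ]
      rw [div_eq_mul_inv, inv_inv]
      ring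
    rw [hL, hswap, hR, hfinal]
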